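/- If s is a finite binary sequence and X ⊆ 2^ω is comeager in the basic open set [s] = {x ∈ 2^ω : s is an initial segment of x} (i.e., [s] ∖ X is meager), then there exists a Silver tree T with [T] ⊆ X ∩ [s]. -/

import Mathlib

/-- `T` is a tree of finite binary sequences: closed under initial segments. -/
def IsTree (T : Set (List Bool)) : Prop :=
  ∀ t ∈ T, ∀ k : ℕ, t.take k ∈ T

/-- `t` is a splitting node of `T`: it lies in `T` and both its one-bit extensions do. -/
def SplitNode (T : Set (List Bool)) (t : List Bool) : Prop :=
  t ∈ T ∧ t ++ [false] ∈ T ∧ t ++ [true] ∈ T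

/-- `T` is a perfect tree: a nonempty tree in which every node extends to a splitting node. -/
def IsPerfect (T : Set (List Bool)) : Prop :=
  IsTree T ∧ T.Nonempty ∧ ∀ t ∈ T, ∃ s, t <+: s ∧ SplitNode T s

/-- `T` is a Silver (uniform perfect) tree: perfect, and nodes of equal length
have the same one-bit extensions in `T`. -/
def IsSilver (T : Set (List Bool)) : Prop :=
  IsPerfect T ∧ ∀ s ∈ T, ∀ t ∈ T, s.length = t.length →
    ∀ i : Bool, (s ++ [i] ∈ T ↔ t ++ [i] ∈ T)

/-- The body `[T]` of a tree: all infinite branches whose finite initial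
segments all lie in `T`. -/
def body (T : Set (List Bool)) : Set (ℕ → Bool) :=
  { x | ∀ n : ℕ, (List.ofFn fun i : Fin n => x i) ∈ T }

/-- The basic open set `[s]` of all branches extending the finite sequence `s`. -/
def cyl (s : List Bool) : Set (ℕ → Bool) :=
  { x | ∀ i : Fin s.length, x i = s.get i }

namespace SilverAux

lemma mem_cyl_iff {u : List Bool} {x : ℕ → Bool} :
    x ∈ cyl u ↔ ∀ i (h : i < u.length), x i = u[i] := by
  constructor
  · intro hx i h; exact hx ⟨i, h⟩
  · intro hx i; exact hx i i.isLt

lemma cyl_anti {u v : List Bool} (h : u <+: v) : cyl v ⊆ cyl u := by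
  obtain ⟨w, rfl⟩ := h
  intro x hx
  rw [mem_cyl_iff] at hx ⊢
  intro i hi
  have := hx i (by simp; omega)
  rwa [List.getElem_append_left hi] at this

lemma isOpen_cyl (u : List Bool) : IsOpen (cyl u) := by
  have : cyl u = ⋂ i : Fin u.length, {x : ℕ → Bool | x i = u.get i} := by
    ext x; simp [cyl, Set.mem_iInter]
  rw [this]
  refine isOpen_iInter_of_finite fun i => ?_
  have : {x : ℕ → Bool | x i = u.get i} = (fun x : ℕ → Bool => x (i : ℕ)) ⁻¹' {u.get i} := rfl
  rw [this]
  exact (continuous_apply (i : ℕ)).isOpen_preimage _ (isOpen_discrete _)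

lemma cyl_nonempty (u : List Bool) : (cyl u).Nonempty := by
  refine ⟨fun i => u.getD i false, ?_⟩
  intro i
  simp [List.getD_eq_getElem?_getD, List.getElem?_eq_getElem i.isLt]

lemma prefix_getElem? {α : Type*} {l₁ l₂ : List α} (h : l₁ <+: l₂) {i : ℕ}
    (hi : i < l₁.length) : l₂[i]? = l₁[i]? := by
  obtain ⟨r, rfl⟩ := h
  rw [List.getElem?_append_left hi]

/-- In a dense open set, every cylinder can be extended to a cylinder inside it. -/
lemma exists_ext {U : Set (ℕ → Bool)} (hU : IsOpen U) (hD : Dense U) (u : List Bool) :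
    ∃ v, cyl (u ++ v) ⊆ U := by
  obtain ⟨x, hxU, hxc⟩ := hD.exists_mem_open (isOpen_cyl u) (cyl_nonempty u)
  obtain ⟨I, w, hIw, hsub⟩ := isOpen_pi_iff.mp hU x hxU
  set N := max u.length ((I.sup id) + 1) with hN
  have huN : u.length ≤ N := le_max_left _ _
  set full : List Bool := List.ofFn (fun i : Fin N => x i) with hfull
  have hlenfull : full.length = N := by simp [hfull]
  have hpre : u <+: full := by
    rw [List.prefix_iff_eq_take]
    apply List.ext_getElem?
    intro n
    rw [List.getElem?_take]
    by_cases hn : n < u.length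
    · rw [if_pos hn, List.getElem?_eq_getElem hn, List.getElem?_eq_getElem (by omega : n < full.length)]
      have : full[n] = x n := by
        simp [hfull, List.getElem_ofFn]
      rw [this, mem_cyl_iff.mp hxc n hn]
    · rw [if_neg hn, List.getElem?_eq_none (by omega)]
  obtain ⟨v, hv⟩ := hpre
  refine ⟨v, ?_⟩
  intro y hy
  rw [hv] at hy
  apply hsub
  rw [Set.mem_pi]
  intro a haI
  have ha : a < N := by
    have : a ≤ I.sup id := Finset.le_sup (f := id) haI
    omega
  have : y a = x a := by
    have h1 := mem_cyl_iff.mp hy a (by omega)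
    have h2 : full[a]'(by omega) = x a := by
      simp only [hfull]
      rw [List.getElem_ofFn]
    rw [h1, h2]
  rw [this]
  exact (hIw a haI).2

lemma exists_multi_ext {U : Set (ℕ → Bool)} (hU : IsOpen U) (hD : Dense U) :
    ∀ L : List (List Bool), ∃ w, ∀ t ∈ L, cyl (t ++ w) ⊆ U
  | [] => ⟨[], by simp⟩
  | t :: L => by
      obtain ⟨w, hw⟩ := exists_multi_ext hU hD L
      obtain ⟨v, hv⟩ := exists_ext hU hD (t ++ w)
      refine ⟨w ++ v, ?_⟩
      intro t' ht'
      rcases List.mem_cons.mp ht' with rfl | ht'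
      · rwa [← List.append_assoc]
      · refine subset_trans (cyl_anti ⟨v, by rw [List.append_assoc]⟩) (hw t' ht')

/-- Compatibility of a binary string with a pattern. -/
def Compat (p : List (Option Bool)) (t : List Bool) : Prop :=
  List.Forall₂ (fun o b => ∀ c, o = some c → b = c) p t

lemma compat_get {p : List (Option Bool)} {t : List Bool} (h : Compat p t) :
    t.length = p.length ∧ ∀ (i : ℕ) (c : Bool), p[i]? = some (some c) → t[i]? = some c := by
  obtain ⟨hl, hg⟩ := List.forall₂_iff_get.mp h
  refine ⟨hl.symm, fun i c hc => ?_⟩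
  rcases lt_or_ge i p.length with hi | hi
  · have h2 : i < t.length := hl ▸ hi
    have := hg i hi h2
    rw [List.getElem?_eq_getElem hi] at hc
    rw [List.getElem?_eq_getElem h2]
    simp only [List.get_eq_getElem] at this
    rw [this c (by injection hc)]
  · rw [List.getElem?_eq_none hi] at hc; cases hc

lemma compat_of_get {p : List (Option Bool)} {t : List Bool} (hl : t.length = p.length)
    (hg : ∀ (i : ℕ) (c : Bool), p[i]? = some (some c) → t[i]? = some c) : Compat p t := by
  rw [Compat, List.forall₂_iff_get]
  refine ⟨hl.symm, fun i h1 h2 c hc => ?_⟩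
  have := hg i c (by rw [List.getElem?_eq_getElem h1]; simp only [List.get_eq_getElem] at hc; rw [hc])
  rw [List.getElem?_eq_getElem h2] at this
  simp only [List.get_eq_getElem]
  injection this

/-- All completions of a pattern. -/
def compl : List (Option Bool) → List (List Bool)
  | [] => [[]]
  | some b :: p => (compl p).map (b :: ·)
  | none :: p => (compl p).map (false :: ·) ++ (compl p).map (true :: ·)

lemma mem_compl {p : List (Option Bool)} {t : List Bool} (h : Compat p t) : t ∈ compl p := by
  induction h with
  | nil => simp [compl]
  | @cons o b p t ho _ ih =>
      cases o with
      | some c =>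
          have : b = c := ho c rfl
          subst this
          simpa [compl] using List.mem_map_of_mem (f := (b :: ·)) ih
      | none =>
          cases b
          · exact List.mem_append_left _ (List.mem_map_of_mem (f := (false :: ·)) ih)
          · exact List.mem_append_right _ (List.mem_map_of_mem (f := (true :: ·)) ih)

/-- One fusion step: extend the pattern so that every compatible branch lies in `U`,
then add a new splitting (free) level at the end. -/
noncomputable def step (U : Set (ℕ → Bool)) (hU : IsOpen U) (hD : Dense U)
    (p : List (Option Bool)) : List (Option Bool) :=
  p ++ ((exists_multi_ext hU hD (compl p)).choose.map some) ++ [none]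

lemma step_prefix (U hU hD p) : p <+: step U hU hD p :=
  ⟨_, by rw [step, List.append_assoc]⟩

lemma step_length (U hU hD p) :
    (step U hU hD p).length =
      p.length + (exists_multi_ext hU hD (compl p)).choose.length + 1 := by
  simp [step]; omega

lemma step_none (U hU hD p) :
    (step U hU hD p)[p.length + (exists_multi_ext hU hD (compl p)).choose.length]? =
      some none := by
  simp only [step]
  rw [List.getElem?_append_right (by simp)]
  simp

lemma step_key {U : Set (ℕ → Bool)} {hU : IsOpen U} {hD : Dense U} {p : List (Option Bool)}
    {t : List Bool} (h : Compat (step U hU hD p) t) : cyl t ⊆ U := by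
  set w := (exists_multi_ext hU hD (compl p)).choose with hwdef
  have hw := (exists_multi_ext hU hD (compl p)).choose_spec
  obtain ⟨hlen, hg⟩ := compat_get h
  rw [step_length] at hlen
  rw [← hwdef] at hlen
  -- the first p.length entries of t form a completion of p
  have hcp : Compat p (t.take p.length) := by
    apply compat_of_get
    · rw [List.length_take]; omega
    · intro i c hc
      have hi : i < p.length := by
        by_contra hi
        rw [List.getElem?_eq_none (by omega)] at hc; cases hc
      rw [List.getElem?_take, if_pos hi]
      apply hg
      simp only [step]
      rw [List.append_assoc, List.getElem?_append_left hi]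
      exact hc
  have hmem := mem_compl hcp
  -- t.take (p.length + w.length) = t.take p.length ++ w
  have htake : t.take (p.length + w.length) = t.take p.length ++ w := by
    apply List.ext_getElem?
    intro n
    rw [List.getElem?_take]
    have hlt : (t.take p.length).length = p.length := by
      rw [List.length_take]; omega
    rcases lt_or_ge n p.length with hn | hn
    · rw [if_pos (by omega), List.getElem?_append_left (by omega),
        List.getElem?_take, if_pos hn]
    · rcases lt_or_ge n (p.length + w.length) with hn2 | hn2
      · rw [if_pos hn2, List.getElem?_append_right (by omega), hlt]
        have hval : (step U hU hD p)[n]? =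
            some (some (w[n - p.length]'(by omega : n - p.length < w.length))) := by
          have h1 : (step U hU hD p)[n]? = (w.map some)[n - p.length]? := by
            simp only [step, ← hwdef]
            rw [List.getElem?_append_left (by simp; omega),
              List.getElem?_append_right (by omega)]
          rw [h1]
          simp [List.getElem?_eq_getElem (show n - p.length < w.length by omega)]
        have h2 := hg n _ hval
        rw [h2, List.getElem?_eq_getElem (by omega : n - p.length < w.length)]
      · rw [if_neg (by omega), List.getElem?_append_right (by omega), hlt,
          List.getElem?_eq_none (by omega)]
  calc cyl t ⊆ cyl (t.take (p.length + w.length)) :=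
        cyl_anti (List.take_prefix _ _)
    _ = cyl (t.take p.length ++ w) := by rw [htake]
    _ ⊆ U := hw _ hmem

end SilverAux

open SilverAux in
/-- If `X` is comeager in the basic open set `[s]`, then some Silver tree has its
body contained in `X ∩ [s]`. -/
theorem comeager_in_cyl_contains_silver_body (s : List Bool) (X : Set (ℕ → Bool))
    (h : IsMeagre (cyl s \ X)) :
    ∃ T : Set (List Bool), IsSilver T ∧ body T ⊆ X ∩ cyl s := by
  rw [IsMeagre, mem_residual_iff] at h
  obtain ⟨S, hSo, hSd, hSc, hSsub⟩ := h
  obtain ⟨u, huS⟩ := (hSc.insert Set.univ).exists_eq_range ⟨_, Set.mem_insert _ _⟩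
  have humem : ∀ n, u n ∈ insert Set.univ S := fun n => huS ▸ Set.mem_range_self n
  have hU : ∀ n, IsOpen (u n) := by
    intro n
    rcases humem n with h' | h'
    · rw [h']; exact isOpen_univ
    · exact hSo _ h'
  have hD : ∀ n, Dense (u n) := by
    intro n
    rcases humem n with h' | h'
    · rw [h']; exact dense_univ
    · exact hSd _ h'
  have hIcap : ∀ x : ℕ → Bool, (∀ n, x ∈ u n) → x ∈ (cyl s \ X)ᶜ := by
    intro x hx
    apply hSsub
    intro t ht
    have : t ∈ insert Set.univ S := Set.mem_insert_iff.mpr (Or.inr ht)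
    rw [huS] at this
    obtain ⟨n, rfl⟩ := this
    exact hx n
  -- the fusion sequence of patterns
  set P : ℕ → List (Option Bool) :=
    fun n => Nat.rec (s.map some) (fun n p => step (u n) (hU n) (hD n) p) n with hP
  have hPsucc : ∀ n, P (n + 1) = step (u n) (hU n) (hD n) (P n) := fun n => rfl
  have hPlen : ∀ n, n ≤ (P n).length := by
    intro n
    induction n with
    | zero => exact Nat.zero_le _
    | succ n ih => rw [hPsucc, step_length]; omega
  have hPmono : ∀ m n, m ≤ n → P m <+: P n := by
    intro m n hmn
    induction n with
    | zero => rw [Nat.le_zero.mp hmn]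
    | succ n ih =>
        rcases Nat.lt_or_ge m (n + 1) with h' | h'
        · exact (ih (by omega)).trans (hPsucc n ▸ step_prefix _ _ _ _)
        · rw [Nat.le_antisymm hmn h']
  -- the limit pattern
  set f : ℕ → Option Bool := fun i => ((P (i + 1))[i]?).getD none with hf
  have hfP : ∀ n i, i < (P n).length → (P n)[i]? = some (f i) := by
    intro n i hi
    have hi1 : i < (P (i + 1)).length := by have := hPlen (i + 1); omega
    have hival : (P (i+1))[i]? = some (f i) := by
      simp [hf, List.getElem?_eq_getElem hi1]
    rcases le_total n (i + 1) with h' | h'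
    · rw [← prefix_getElem? (hPmono n (i+1) h') hi]; exact hival
    · rw [prefix_getElem? (hPmono (i+1) n h') hi1]; exact hival
  -- infinitely many free (none) levels
  have hnone : ∀ k, ∃ i, k ≤ i ∧ f i = none := by
    intro k
    set m := (P k).length + (exists_multi_ext (hU k) (hD k) (compl (P k))).choose.length
      with hm
    refine ⟨m, by have := hPlen k; omega, ?_⟩
    have h1 : (P (k+1))[m]? = some none := hPsucc k ▸ step_none (u k) (hU k) (hD k) (P k)
    have h2 : m < (P (k+1)).length := by
      rw [hPsucc, step_length]; omega
    have := hfP (k+1) m h2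
    rw [h1] at this
    exact (Option.some_injective _ this).symm
  -- the Silver tree
  set T : Set (List Bool) := {t | ∀ i, i < t.length → ∀ c, f i = some c → t[i]? = some c}
    with hT
  have hnil : ([] : List Bool) ∈ T := by intro i hi; simp at hi
  have htree : IsTree T := by
    intro t ht k i hi c hc
    rw [List.length_take] at hi
    rw [List.getElem?_take, if_pos (by omega)]
    exact ht i (by omega) c hc
  -- extension within T to any length
  have hext : ∀ t ∈ T, ∀ n, t.length ≤ n → ∃ t', t' ∈ T ∧ t <+: t' ∧ t'.length = n := by
    intro t ht n hn
    refine ⟨t ++ List.ofFn (fun j : Fin (n - t.length) => (f (t.length + j)).getD false),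
      ?_, ⟨_, rfl⟩, by simp; omega⟩
    intro i hi c hc
    rcases lt_or_ge i t.length with h' | h'
    · rw [List.getElem?_append_left h']
      exact ht i h' c hc
    · rw [List.getElem?_append_right h']
      have hlt : i - t.length < n - t.length := by simp at hi; omega
      rw [List.getElem?_eq_getElem (by simpa using hlt)]
      congr 1
      rw [List.getElem_ofFn]
      have : t.length + (i - t.length) = i := by omega
      simp only [this]
      rw [hc]; rfl
  -- one-bit extension characterization
  have hsplit : ∀ t ∈ T, ∀ b : Bool,
      (t ++ [b] ∈ T ↔ ∀ c, f t.length = some c → c = b) := by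
    intro t ht b
    constructor
    · intro h' c hc
      have := h' t.length (by simp) c hc
      rw [List.getElem?_append_right le_rfl] at this
      simp at this
      exact this.symm
    · intro h' i hi c hc
      rcases lt_or_ge i t.length with h2 | h2
      · rw [List.getElem?_append_left h2]; exact ht i h2 c hc
      · have : i = t.length := by simp at hi; omega
        subst this
        rw [List.getElem?_append_right le_rfl]
        simp [h' c hc]
  have hsilver : IsSilver T := by
    refine ⟨⟨htree, ⟨[], hnil⟩, ?_⟩, ?_⟩
    · intro t ht
      obtain ⟨i, hik, hin⟩ := hnone t.length
      obtain ⟨t', ht', hpre, hlen'⟩ := hext t ht i hik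
      refine ⟨t', hpre, ht', ?_, ?_⟩ <;>
        · rw [hsplit t' ht']
          intro c hc
          rw [hlen', hin] at hc
          cases hc
    · intro a ha b hb hab i
      rw [hsplit a ha, hsplit b hb, hab]
  refine ⟨T, hsilver, ?_⟩
  -- body T ⊆ cyl s
  have hfs : ∀ i, (h' : i < s.length) → f i = some s[i] := by
    intro i hi
    have h0 : (P 0)[i]? = some (f i) := hfP 0 i (by simp [hP]; omega)
    have : (P 0)[i]? = some (some s[i]) := by
      show (s.map some)[i]? = _
      rw [List.getElem?_map, List.getElem?_eq_getElem hi]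
      rfl
    rw [this] at h0
    exact (Option.some_injective _ h0).symm
  have hbodycyl : body T ⊆ cyl s := by
    intro x hx i
    have ht := hx s.length
    have := ht i (by simpa using i.isLt) s[i] (hfs i i.isLt)
    rw [List.getElem?_eq_getElem (by simpa using i.isLt)] at this
    have h2 : (List.ofFn fun j : Fin s.length => x j)[(i : ℕ)] = x i := by
      rw [List.getElem_ofFn]
    rw [h2] at this
    have := Option.some_injective _ this
    simp [this]
  intro x hx
  refine ⟨?_, hbodycyl hx⟩
  have hxu : ∀ n, x ∈ u n := by
    intro n
    set m := (P (n+1)).length with hm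
    set t : List Bool := List.ofFn fun j : Fin m => x j with htd
    have htT : t ∈ T := hx m
    have hcompat : Compat (P (n+1)) t := by
      apply compat_of_get
      · simp [htd]; exact hm
      · intro i c hc
        have hi : i < m := by
          by_contra hi
          rw [List.getElem?_eq_none (by omega)] at hc; cases hc
        have := hfP (n+1) i (by omega)
        rw [this] at hc
        exact htT i (by simpa [htd] using hi) c (Option.some_injective _ hc)
    have hsub : cyl t ⊆ u n := step_key (hPsucc n ▸ hcompat)
    apply hsub
    rw [mem_cyl_iff]
    intro i hi
    have h1 : t[i]? = some (x i) := by
      rw [htd, List.getElem?_eq_getElem (by simpa [htd] using hi), List.getElem_ofFn]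
    have h2 : t[i]? = some (t[i]'hi) := List.getElem?_eq_getElem hi
    have h3 := h1.symm.trans h2
    injection h3
  have := hIcap x hxu
  rw [Set.mem_compl_iff, Set.mem_diff, not_and, not_not] at this
  exact this (hbodycyl hx)
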